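/- Let F be a totally real number field of degree d over ℚ with ring of integers O_F, let 𝔑 be a nonzero ideal of O_F, let 𝔭₁, …, 𝔭_m be distinct nonzero prime ideals of O_F none of which divides 𝔑, let a ∈ O_F be nonzero, and let r₁, …, r_m, t₁, …, t_m be nonnegative integers. Let S be the set of y ∈ 𝔑 with y ≠ 0 and y ≠ a such that for each i the exact power of 𝔭_i dividing the ideal (y) is r_i and the exact power of 𝔭_i dividing the ideal (y − a) is t_i, and such that |σ(y)| < |σ(a)| for every real embedding σ : F → ℝ. Then the cardinality of S is at most 1 + 2^d · |N_{F/ℚ}(a)| / (N(𝔑) · Π_{i=1}^m N(𝔭_i)^{max(r_i, t_i)}), where N denotes the absolute norm of an ideal and N_{F/ℚ} the field norm. -/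

import Mathlib

open NumberField

set_option maxHeartbeats 1000000

noncomputable def Complex.abs : AbsoluteValue ℂ ℝ where
  toFun z := ‖z‖
  map_mul' := norm_mul
  nonneg' := norm_nonneg
  eq_zero' _ := norm_eq_zero
  add_le' := norm_add_le

lemma Complex.abs_ofReal (r : ℝ) : Complex.abs (r : ℂ) = |r| := Complex.norm_real r

section AuxEmb

variable {F : Type*} [Field F]

def realEmbOf (φ : F →+* ℂ) (htr : ∀ y : F, (φ y).im = 0) : F →+* ℝ where
  toFun y := (φ y).re
  map_one' := by simp
  map_mul' x y := by simp [Complex.mul_re, htr]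
  map_zero' := by simp
  map_add' x y := by simp

lemma realEmbOf_spec (φ : F →+* ℂ) (htr : ∀ y : F, (φ y).im = 0) (y : F) :
    φ y = ((realEmbOf φ htr y : ℝ) : ℂ) :=
  Complex.ext (by simp [realEmbOf]) (by simp [realEmbOf, htr y])

lemma abs_realEmbOf (φ : F →+* ℂ) (htr : ∀ y : F, (φ y).im = 0) (y : F) :
    Complex.abs (φ y) = |realEmbOf φ htr y| := by
  conv_lhs => rw [realEmbOf_spec φ htr y]
  exact Complex.abs_ofReal _

end AuxEmb

lemma abs_norm_eq_prod_embs (F : Type*) [Field F] [NumberField F] (x : 𝓞 F) :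
    ∏ φ : F →+* ℂ, Complex.abs (φ (algebraMap (𝓞 F) F x)) = |(Algebra.norm ℤ x : ℝ)| := by
  have h := congr_arg Complex.abs
    (Algebra.norm_eq_prod_embeddings ℚ ℂ (algebraMap (𝓞 F) F x))
  rw [map_prod] at h
  rw [Fintype.prod_equiv (RingHom.equivRatAlgHom F ℂ)
      (fun φ : F →+* ℂ => Complex.abs (φ (algebraMap (𝓞 F) F x)))
      (fun σ : F →ₐ[ℚ] ℂ => Complex.abs (σ (algebraMap (𝓞 F) F x)))
      (fun φ => by simp [RingHom.equivRatAlgHom_apply]), ← h,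
    eq_ratCast (algebraMap ℚ ℂ), ← Complex.ofReal_ratCast, Complex.abs_ofReal,
    ← Algebra.coe_norm_int]
  push_cast
  ring


/-- The set of lattice points counted in Lemma 6.1 (claim:size): elements `y` of the ideal
`𝔑`, different from `0` and from `a`, such that `v_{𝔭 i}(y) = r i` and `v_{𝔭 i}(y − a) = t i`
exactly, and `|σ(y)| < |σ(a)|` for every real embedding `σ`. -/
def latticePointSet (F : Type*) [Field F] [NumberField F]
    (𝔑 : Ideal (𝓞 F)) (m : ℕ) (𝔭 : Fin m → Ideal (𝓞 F)) (a : 𝓞 F)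
    (r t : Fin m → ℕ) : Set (𝓞 F) :=
  {y | y ∈ 𝔑 ∧ y ≠ 0 ∧ y ≠ a ∧
    (∀ i, 𝔭 i ^ r i ∣ Ideal.span {y} ∧ ¬𝔭 i ^ (r i + 1) ∣ Ideal.span {y}) ∧
    (∀ i, 𝔭 i ^ t i ∣ Ideal.span {y - a} ∧ ¬𝔭 i ^ (t i + 1) ∣ Ideal.span {y - a}) ∧
    (∀ σ : F →+* ℝ, |σ (algebraMap (𝓞 F) F y)| < |σ (algebraMap (𝓞 F) F a)|)}

/-- Lemma 6.1 (claim:size): for a totally real number field `F` of degree `d`, a nonzero ideal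
`𝔑`, distinct nonzero primes `𝔭 1, …, 𝔭 m` not dividing `𝔑`, and nonzero `a ∈ O_F`, the set
of `y ∈ 𝔑` with prescribed exact `𝔭 i`-adic valuations of `(y)` and `(y − a)` and with
`|σ(y)| < |σ(a)|` at all real embeddings is finite of cardinality at most
`1 + 2^d |N_{F/ℚ}(a)| / (N(𝔑) ∏ i N(𝔭 i)^{max(r i, t i)})`. -/
theorem lattice_point_count
    (F : Type*) [Field F] [NumberField F] (d : ℕ) (hd : Module.finrank ℚ F = d)
    (htr : ∀ φ : F →+* ℂ, ∀ y : F, (φ y).im = 0)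
    (𝔑 : Ideal (𝓞 F)) (h𝔑 : 𝔑 ≠ ⊥)
    (m : ℕ) (𝔭 : Fin m → Ideal (𝓞 F))
    (hprime : ∀ i, Prime (𝔭 i)) (hinj : Function.Injective 𝔭)
    (hndvd : ∀ i, ¬𝔭 i ∣ 𝔑)
    (a : 𝓞 F) (ha : a ≠ 0) (r t : Fin m → ℕ) :
    (latticePointSet F 𝔑 m 𝔭 a r t).Finite ∧
    ((latticePointSet F 𝔑 m 𝔭 a r t).ncard : ℝ) ≤
      1 + 2 ^ d * |(Algebra.norm ℤ a : ℝ)| /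
        ((Ideal.absNorm 𝔑 : ℝ) * ∏ i, (Ideal.absNorm (𝔭 i) : ℝ) ^ max (r i) (t i)) := by
  classical
  set S := latticePointSet F 𝔑 m 𝔭 a r t with hSdef
  set 𝔞 : Ideal (𝓞 F) := 𝔑 * ∏ i, 𝔭 i ^ (max (r i) (t i)) with h𝔞
  -- 𝔞 is nonzero
  have h𝔞ne : 𝔞 ≠ ⊥ := by
    rw [h𝔞]
    refine mul_ne_zero h𝔑 ?_
    exact Finset.prod_ne_zero_iff.mpr fun i _ => pow_ne_zero _ (hprime i).ne_zero
  have hNpos : (0 : ℝ) < (Ideal.absNorm 𝔞 : ℝ) := by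
    have : Ideal.absNorm 𝔞 ≠ 0 := by
      rw [Ne, Ideal.absNorm_eq_zero_iff]; exact h𝔞ne
    exact_mod_cast Nat.pos_of_ne_zero this
  -- key divisibility: for y, y' ∈ S, 𝔞 ∣ (y - y')
  have key : ∀ y ∈ S, ∀ y' ∈ S, 𝔞 ∣ Ideal.span {y - y'} := by
    intro y hy y' hy'
    obtain ⟨hy𝔑, -, -, hyr, hyt, -⟩ := hy
    obtain ⟨hy'𝔑, -, -, hy'r, hy't, -⟩ := hy'
    have hNdvd : 𝔑 ∣ Ideal.span {y - y'} :=
      Ideal.dvd_span_singleton.mpr (Submodule.sub_mem _ hy𝔑 hy'𝔑)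
    have hpdvd : ∀ i, 𝔭 i ^ (max (r i) (t i)) ∣ Ideal.span {y - y'} := by
      intro i
      rcases le_total (r i) (t i) with h | h
      · rw [max_eq_right h]
        have h1 : y - a ∈ 𝔭 i ^ t i := Ideal.dvd_span_singleton.mp (hyt i).1
        have h2 : y' - a ∈ 𝔭 i ^ t i := Ideal.dvd_span_singleton.mp (hy't i).1
        have : y - y' ∈ 𝔭 i ^ t i := by
          have := Submodule.sub_mem _ h1 h2
          simpa using this
        exact Ideal.dvd_span_singleton.mpr this
      · rw [max_eq_left h]
        have h1 : y ∈ 𝔭 i ^ r i := Ideal.dvd_span_singleton.mp (hyr i).1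
        have h2 : y' ∈ 𝔭 i ^ r i := Ideal.dvd_span_singleton.mp (hy'r i).1
        exact Ideal.dvd_span_singleton.mpr (Submodule.sub_mem _ h1 h2)
    -- combine using coprimality
    have comb : ∀ s : Finset (Fin m),
        (𝔑 * ∏ i ∈ s, 𝔭 i ^ (max (r i) (t i))) ∣ Ideal.span {y - y'} := by
      intro s
      induction s using Finset.induction with
      | empty => simpa using hNdvd
      | @insert j s hj ih =>
        have hnd : ¬𝔭 j ∣ 𝔑 * ∏ i ∈ s, 𝔭 i ^ (max (r i) (t i)) := by
          intro hdvd
          rcases (hprime j).dvd_mul.mp hdvd with h | h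
          · exact hndvd j h
          · obtain ⟨i, hi, hdi⟩ := (hprime j).exists_mem_finset_dvd h
            have : 𝔭 j ∣ 𝔭 i := (hprime j).dvd_of_dvd_pow hdi
            have heq : 𝔭 j = 𝔭 i :=
              associated_iff_eq.mp ((hprime j).associated_of_dvd (hprime i) this)
            exact hj (hinj heq ▸ hi)
        obtain ⟨c, hc⟩ := ih
        have hpj : 𝔭 j ^ (max (r j) (t j)) ∣ c :=
          (hprime j).pow_dvd_of_dvd_mul_left _ hnd (hc ▸ hpdvd j)
        rw [Finset.prod_insert hj, mul_comm (𝔭 j ^ (max (r j) (t j))) _, ← mul_assoc, hc]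
        exact mul_dvd_mul_left _ hpj
    simpa using comb Finset.univ
  -- norm lower bound for nonzero elements of 𝔞
  have normLB : ∀ x : 𝓞 F, x ≠ 0 → 𝔞 ∣ Ideal.span {x} →
      (Ideal.absNorm 𝔞 : ℝ) ≤ |(Algebra.norm ℤ x : ℝ)| := by
    intro x hx hdvd
    have hle : Ideal.span {x} ≤ 𝔞 := Ideal.le_of_dvd hdvd
    have hdn : Ideal.absNorm 𝔞 ∣ Ideal.absNorm (Ideal.span {x}) :=
      Ideal.absNorm_dvd_absNorm_of_le hle
    rw [Ideal.absNorm_span_singleton] at hdn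
    have hne : (Algebra.norm ℤ x).natAbs ≠ 0 := by
      rw [Int.natAbs_ne_zero]
      have : Ideal.span {x} ≠ ⊥ := by
        simpa [Ideal.span_singleton_eq_bot] using hx
      intro h0
      apply this
      rw [← Ideal.absNorm_eq_zero_iff, Ideal.absNorm_span_singleton, h0]
      rfl
    have := Nat.le_of_dvd (Nat.pos_of_ne_zero hne) hdn
    calc (Ideal.absNorm 𝔞 : ℝ) ≤ ((Algebra.norm ℤ x).natAbs : ℝ) := by exact_mod_cast this
      _ = |(Algebra.norm ℤ x : ℝ)| := by
          rw [Nat.cast_natAbs]; push_cast; ring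
  -- embedding setup
  have hcard : Fintype.card (F →+* ℂ) = d := by
    rw [NumberField.Embeddings.card F ℂ]; exact hd
  obtain ⟨φ₀⟩ : Nonempty (F →+* ℂ) := inferInstance
  set σ₁ : F →+* ℝ := realEmbOf φ₀ (htr φ₀) with hσ₁
  have hιa : algebraMap (𝓞 F) F a ≠ 0 := RingOfIntegers.coe_ne_zero_iff.mpr ha
  set A : ℝ := |σ₁ (algebraMap (𝓞 F) F a)| with hA
  have hApos : 0 < A :=
    abs_pos.mpr fun h0 => hιa (σ₁.injective (by rw [h0, map_zero]))
  have hφabs : ∀ (φ : F →+* ℂ) (z : 𝓞 F), z ≠ 0 →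
      0 < Complex.abs (φ (algebraMap (𝓞 F) F z)) := by
    intro φ z hz
    exact AbsoluteValue.pos _ fun h0 =>
      (RingOfIntegers.coe_ne_zero_iff.mpr hz) (φ.injective (by rw [h0, map_zero]))
  set Na : ℝ := |(Algebra.norm ℤ a : ℝ)| with hNa
  have hNapos : 0 < Na := by
    rw [hNa, ← abs_norm_eq_prod_embs F a]
    exact Finset.prod_pos fun φ _ => hφabs φ a ha
  set Q : ℝ := 2 ^ d * Na / (Ideal.absNorm 𝔞 : ℝ) with hQ
  have hQpos : 0 < Q := div_pos (mul_pos (pow_pos two_pos d) hNapos) hNpos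
  set n : ℕ := ⌈Q⌉₊ with hn
  have hnpos : 0 < n := Nat.ceil_pos.mpr hQpos
  have hnR : (0:ℝ) < n := by exact_mod_cast hnpos
  set step : ℝ := 2 * A / n with hstep
  have hsteppos : 0 < step := div_pos (by linarith) hnR
  have hstepne : step ≠ 0 := ne_of_gt hsteppos
  set k : 𝓞 F → ℤ := fun y => ⌊(σ₁ (algebraMap (𝓞 F) F y) + A) / step⌋ with hk
  -- injectivity on S
  have hkinj : Set.InjOn k S := by
    intro y hy y' hy' hkeq
    by_contra hne
    have hx0 : y - y' ≠ 0 := sub_ne_zero.mpr hne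
    have hclose : |σ₁ (algebraMap (𝓞 F) F (y - y'))| < step := by
      set u := (σ₁ (algebraMap (𝓞 F) F y) + A) / step with hu
      set v := (σ₁ (algebraMap (𝓞 F) F y') + A) / step with hv
      have hfl : ⌊u⌋ = ⌊v⌋ := hkeq
      have h1 : u - v = Int.fract u - Int.fract v := by
        rw [← Int.self_sub_floor, ← Int.self_sub_floor, hfl]; ring
      have h2 : |u - v| < 1 := by
        rw [h1, abs_sub_lt_iff]
        constructor <;>
          nlinarith [Int.fract_nonneg u, Int.fract_lt_one u, Int.fract_nonneg v,
            Int.fract_lt_one v]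
      have h3 : σ₁ (algebraMap (𝓞 F) F (y - y')) = (u - v) * step := by
        rw [map_sub, map_sub, hu, hv]
        field_simp
        ring
      rw [h3, abs_mul, abs_of_pos hsteppos]
      calc |u - v| * step < 1 * step := mul_lt_mul_of_pos_right h2 hsteppos
        _ = step := one_mul _
    have hLB := normLB (y - y') hx0 (key y hy y' hy')
    have hφ₀x : Complex.abs (φ₀ (algebraMap (𝓞 F) F (y - y'))) < step := by
      rw [abs_realEmbOf φ₀ (htr φ₀)]; exact hclose
    have hother : ∀ φ : F →+* ℂ,
        Complex.abs (φ (algebraMap (𝓞 F) F (y - y'))) ≤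
          2 * Complex.abs (φ (algebraMap (𝓞 F) F a)) := by
      intro φ
      have hy1 := hy.2.2.2.2.2 (realEmbOf φ (htr φ))
      have hy2 := hy'.2.2.2.2.2 (realEmbOf φ (htr φ))
      rw [abs_realEmbOf φ (htr φ), abs_realEmbOf φ (htr φ), map_sub, map_sub]
      have habs := abs_sub (realEmbOf φ (htr φ) (algebraMap (𝓞 F) F y))
        (realEmbOf φ (htr φ) (algebraMap (𝓞 F) F y'))
      linarith
    have hprod : |(Algebra.norm ℤ (y - y') : ℝ)| < 2 ^ d * Na / n := by
      rw [← abs_norm_eq_prod_embs F (y - y')]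
      rw [← Finset.mul_prod_erase Finset.univ
        (fun φ : F →+* ℂ => Complex.abs (φ (algebraMap (𝓞 F) F (y - y'))))
        (Finset.mem_univ φ₀)]
      have hP2 : ∏ φ ∈ Finset.univ.erase φ₀,
            Complex.abs (φ (algebraMap (𝓞 F) F (y - y'))) ≤
          ∏ φ ∈ Finset.univ.erase φ₀,
            2 * Complex.abs (φ (algebraMap (𝓞 F) F a)) :=
        Finset.prod_le_prod (fun φ _ => AbsoluteValue.nonneg _ _) (fun φ _ => hother φ)
      have hP2pos : 0 < ∏ φ ∈ Finset.univ.erase φ₀,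
          2 * Complex.abs (φ (algebraMap (𝓞 F) F a)) :=
        Finset.prod_pos fun φ _ => by linarith [hφabs φ a ha]
      have hfull : ∏ φ : F →+* ℂ, (2 * Complex.abs (φ (algebraMap (𝓞 F) F a)))
          = 2 ^ d * Na := by
        rw [Finset.prod_mul_distrib, Finset.prod_const, Finset.card_univ, hcard,
          abs_norm_eq_prod_embs F a, hNa]
      have hmulerase : (2 * Complex.abs (φ₀ (algebraMap (𝓞 F) F a))) *
          ∏ φ ∈ Finset.univ.erase φ₀, 2 * Complex.abs (φ (algebraMap (𝓞 F) F a))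
          = 2 ^ d * Na := by
        rw [Finset.mul_prod_erase Finset.univ
          (fun φ : F →+* ℂ => 2 * Complex.abs (φ (algebraMap (𝓞 F) F a)))
          (Finset.mem_univ φ₀)]
        exact hfull
      have hstep2 : step = 2 * Complex.abs (φ₀ (algebraMap (𝓞 F) F a)) / n := by
        rw [hstep, abs_realEmbOf φ₀ (htr φ₀), hA]
      calc Complex.abs (φ₀ (algebraMap (𝓞 F) F (y - y'))) *
            ∏ φ ∈ Finset.univ.erase φ₀,
              Complex.abs (φ (algebraMap (𝓞 F) F (y - y')))
          ≤ Complex.abs (φ₀ (algebraMap (𝓞 F) F (y - y'))) *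
            ∏ φ ∈ Finset.univ.erase φ₀,
              2 * Complex.abs (φ (algebraMap (𝓞 F) F a)) :=
            mul_le_mul_of_nonneg_left hP2 (AbsoluteValue.nonneg _ _)
        _ < step * ∏ φ ∈ Finset.univ.erase φ₀,
              2 * Complex.abs (φ (algebraMap (𝓞 F) F a)) :=
            mul_lt_mul_of_pos_right hφ₀x hP2pos
        _ = 2 ^ d * Na / n := by
            rw [hstep2, div_mul_eq_mul_div, hmulerase]
    have hfin : 2 ^ d * Na / (n:ℝ) ≤ (Ideal.absNorm 𝔞 : ℝ) := by
      rw [div_le_iff₀ hnR]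
      have hle : Q ≤ (n:ℝ) := Nat.le_ceil Q
      rw [hQ, div_le_iff₀ hNpos] at hle
      linarith [mul_comm (n:ℝ) ((Ideal.absNorm 𝔞 : ℝ))]
    linarith
  -- finiteness and counting
  have himg : k '' S ⊆ ↑(Finset.Ico (0:ℤ) (n:ℤ)) := by
    rintro - ⟨y, hy, rfl⟩
    have hys : |σ₁ (algebraMap (𝓞 F) F y)| < A := hy.2.2.2.2.2 σ₁
    simp only [Finset.coe_Ico, Set.mem_Ico, hk]
    constructor
    · refine Int.floor_nonneg.mpr (div_nonneg ?_ hsteppos.le)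
      have := neg_lt_of_abs_lt hys
      linarith
    · refine Int.floor_lt.mpr ?_
      rw [div_lt_iff₀ hsteppos]
      have h2A : (n:ℝ) * step = 2 * A := by
        rw [hstep]; field_simp
      have := lt_of_abs_lt hys
      push_cast
      linarith
  have hfinS : S.Finite :=
    Set.Finite.of_finite_image (((Finset.Ico (0:ℤ) (n:ℤ)).finite_toSet).subset himg) hkinj
  refine ⟨hfinS, ?_⟩
  have hcount : (S.ncard : ℝ) ≤ n := by
    have h1 : S.ncard = (k '' S).ncard := (Set.ncard_image_of_injOn hkinj).symm
    have h2 : (k '' S).ncard ≤ (Finset.Ico (0:ℤ) (n:ℤ)).card := by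
      rw [← Set.ncard_coe_finset]
      exact Set.ncard_le_ncard himg (Finset.finite_toSet _)
    have h3 : (Finset.Ico (0:ℤ) (n:ℤ)).card = n := by
      simp [Int.toNat_natCast]
    have : S.ncard ≤ n := by omega
    exact_mod_cast this
  have hQ1 : (n:ℝ) ≤ Q + 1 := le_of_lt (by simpa [hn] using Nat.ceil_lt_add_one hQpos.le)
  have hden : (Ideal.absNorm 𝔞 : ℝ) =
      (Ideal.absNorm 𝔑 : ℝ) * ∏ i, (Ideal.absNorm (𝔭 i) : ℝ) ^ max (r i) (t i) := by
    rw [h𝔞, map_mul, map_prod]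
    push_cast
    simp [map_pow]
  calc (S.ncard : ℝ) ≤ n := hcount
    _ ≤ Q + 1 := hQ1
    _ = 1 + 2 ^ d * |(Algebra.norm ℤ a : ℝ)| /
        ((Ideal.absNorm 𝔑 : ℝ) * ∏ i, (Ideal.absNorm (𝔭 i) : ℝ) ^ max (r i) (t i)) := by
      rw [hQ, hNa, ← hden]; ring
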